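/- For every fixed ξ ∈ ℝ, the function (a,b) ↦ α*₁(a,b,ξ) is positively one-homogeneous, i.e. α*₁(λa, λb, ξ) = λ·α*₁(a,b,ξ) for all a, b > 0 and λ > 0, and is jointly concave on (0,∞)². -/

import Mathlib

open Real Filter Topology

/-- The logarithmic mean `Λ(s,t)`. -/
noncomputable def logMean (s t : ℝ) : ℝ :=
  if s = t then s else (s - t) / (Real.log s - Real.log t)

/-- The harmonic-logarithmic mean `Λ_H(s,t) = st/Λ(s,t)`. -/
noncomputable def harmLogMean (s t : ℝ) : ℝ := s * t / logMean s t

/-- `α*₁(a,b,ξ) = ∫₀^ξ sinh(x) Λ_H(a e^{-x}, b e^{x}) dx`. -/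
noncomputable def alphaOne (a b ξ : ℝ) : ℝ :=
  ∫ x in (0:ℝ)..ξ, Real.sinh x * harmLogMean (a * Real.exp (-x)) (b * Real.exp x)


noncomputable def myPsi (z : ℝ) : ℝ := if z = 0 then 1 else (Real.exp z - 1) / z

lemma myPsi_pos (z : ℝ) : 0 < myPsi z := by
  unfold myPsi
  rcases lt_trichotomy z 0 with h | h | h
  · rw [if_neg h.ne]
    apply div_pos_of_neg_of_neg _ h
    simpa using Real.exp_lt_one_iff.mpr h
  · simp [h]
  · rw [if_neg h.ne']
    apply div_pos _ h
    simpa using Real.one_lt_exp_iff.mpr h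

lemma myPsi_cont : Continuous myPsi := by
  rw [continuous_iff_continuousAt]
  intro z
  rcases eq_or_ne z 0 with rfl | hz
  · have h1 : Tendsto (slope Real.exp 0) (𝓝[≠] 0) (𝓝 1) := by
      have := Real.hasDerivAt_exp 0
      rw [hasDerivAt_iff_tendsto_slope] at this
      simpa using this
    have h2 : Tendsto myPsi (𝓝[≠] 0) (𝓝 1) := by
      refine h1.congr' ?_
      filter_upwards [self_mem_nhdsWithin] with x hx
      simp only [Set.mem_compl_iff, Set.mem_singleton_iff] at hx
      simp [slope, myPsi, hx, Real.exp_zero, sub_zero, div_eq_inv_mul]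
    have : Tendsto myPsi (𝓝 0) (𝓝 1) := by
      rw [← nhdsNE_sup_pure]
      exact h2.sup (by simpa [myPsi] using tendsto_pure_nhds myPsi 0)
    simpa [ContinuousAt, myPsi] using this
  · have : ContinuousAt (fun z => (Real.exp z - 1) / z) z :=
      ContinuousAt.div (by fun_prop) continuousAt_id hz
    refine this.congr ?_
    filter_upwards [isOpen_ne.mem_nhds hz] with x hx
    simp [myPsi, hx]

lemma harm_eq {s t : ℝ} (hs : 0 < s) (ht : 0 < t) :
    harmLogMean s t = s / myPsi (Real.log s - Real.log t) := by
  unfold harmLogMean logMean myPsi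
  rcases eq_or_ne s t with rfl | hst
  · simp [hs.ne']
  · have hl : Real.log s ≠ Real.log t := fun h => hst (by
      rw [← Real.exp_log hs, ← Real.exp_log ht, h])
    have hz : Real.log s - Real.log t ≠ 0 := sub_ne_zero.mpr hl
    rw [if_neg hst, if_neg hz]
    have he : Real.exp (Real.log s - Real.log t) = s / t := by
      rw [Real.exp_sub, Real.exp_log hs, Real.exp_log ht]
    rw [he]
    field_simp

lemma harm_pos {s t : ℝ} (hs : 0 < s) (ht : 0 < t) : 0 < harmLogMean s t := by
  rw [harm_eq hs ht]; exact div_pos hs (myPsi_pos _)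

noncomputable def EE (u v θ : ℝ) : ℝ := Real.exp (θ * u + (1 - θ) * v)

lemma EE_cont (u v : ℝ) : Continuous fun θ => EE u v θ := by
  unfold EE; fun_prop

lemma EE_pos (u v θ : ℝ) : 0 < EE u v θ := Real.exp_pos _

lemma EE_intble (u v : ℝ) : IntervalIntegrable (fun θ => EE u v θ) MeasureTheory.volume 0 1 :=
  (EE_cont u v).intervalIntegrable 0 1

lemma integral_EE (u v : ℝ) :
    ∫ θ in (0:ℝ)..1, EE u v θ = if u = v then Real.exp u else (Real.exp u - Real.exp v) / (u - v) := by
  rcases eq_or_ne u v with rfl | huv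
  · simp [EE]
    have : ∀ θ : ℝ, θ * u + (1 - θ) * u = u := fun θ => by ring
    simp [this]
  · rw [if_neg huv]
    have hc : u - v ≠ 0 := sub_ne_zero.mpr huv
    have h1 : ∀ θ : ℝ, EE u v θ = Real.exp v * Real.exp (θ * (u - v)) := by
      intro θ; rw [EE, ← Real.exp_add]; ring_nf
    simp only [h1]
    rw [intervalIntegral.integral_const_mul]
    rw [intervalIntegral.integral_comp_mul_right Real.exp hc]
    simp [Real.exp_sub]
    field_simp

lemma integral_EE_pos (u v : ℝ) : 0 < ∫ θ in (0:ℝ)..1, EE u v θ := by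
  rw [integral_EE]
  rcases eq_or_ne u v with rfl | huv
  · simp [Real.exp_pos]
  · rw [if_neg huv]
    rcases huv.lt_or_gt with h | h
    · apply div_pos_of_neg_of_neg <;> simp [Real.exp_lt_exp, h, sub_neg, sub_lt_zero]
    · apply div_pos <;> simp [Real.exp_lt_exp, h, sub_pos]

lemma integral_EE_inv_harm {s t : ℝ} (hs : 0 < s) (ht : 0 < t) :
    ∫ θ in (0:ℝ)..1, EE (-Real.log s) (-Real.log t) θ = 1 / harmLogMean s t := by
  rw [integral_EE, harm_eq hs ht]
  unfold myPsi
  rcases eq_or_ne (Real.log s) (Real.log t) with h | h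
  · have hst : s = t := by rw [← Real.exp_log hs, ← Real.exp_log ht, h]
    subst hst
    simp [Real.exp_neg, Real.exp_log hs]
  · have hz : Real.log s - Real.log t ≠ 0 := sub_ne_zero.mpr h
    rw [if_neg (by simpa using fun hh => h (neg_injective hh)), if_neg hz]
    rw [Real.exp_neg, Real.exp_neg, Real.exp_log hs, Real.exp_log ht,
      Real.exp_sub, Real.exp_log hs, Real.exp_log ht]
    have h1 : s⁻¹ - t⁻¹ = (t - s) / (s * t) := by field_simp
    have h2 : -Real.log s - -Real.log t = -(Real.log s - Real.log t) := by ring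
    have h3 : (-(t * s * Real.log s) + t * s * Real.log t) ≠ 0 := by
      have he : -(t * s * Real.log s) + t * s * Real.log t
          = -(t * s) * (Real.log s - Real.log t) := by ring
      rw [he]
      exact mul_ne_zero (neg_ne_zero.mpr (by positivity)) hz
    rw [h1, h2]
    field_simp
    ring

lemma EE_mul (a b a' b' θ : ℝ) : EE a b θ * EE a' b' θ = EE (a + a') (b + b') θ := by
  unfold EE; rw [← Real.exp_add]; ring_nf

lemma EE_log {s t : ℝ} (hs : 0 < s) (ht : 0 < t) (θ : ℝ) :
    EE (Real.log s) (Real.log t) θ = s ^ θ * t ^ (1 - θ) := by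
  rw [Real.rpow_def_of_pos hs, Real.rpow_def_of_pos ht, EE, Real.exp_add, mul_comm θ, mul_comm (1-θ)]

lemma CS (P Q p q : ℝ) :
    (∫ θ in (0:ℝ)..1, EE (-P) (-Q) θ) ^ 2 ≤
      (∫ θ in (0:ℝ)..1, EE (-2*P+p) (-2*Q+q) θ) * (∫ θ in (0:ℝ)..1, EE (-p) (-q) θ) := by
  set D := ∫ θ in (0:ℝ)..1, EE (-P) (-Q) θ with hD
  set A := ∫ θ in (0:ℝ)..1, EE (-2*P+p) (-2*Q+q) θ with hA
  set C := ∫ θ in (0:ℝ)..1, EE (-p) (-q) θ with hC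
  have hCpos : 0 < C := integral_EE_pos _ _
  have key : ∀ c : ℝ, 0 ≤ A - 2*c*D + c^2*C := by
    intro c
    have hexp : ∀ X Y : ℝ, (Real.exp X - c * Real.exp Y)^2
        = Real.exp (2*X) - 2*c*Real.exp (X+Y) + c^2 * Real.exp (2*Y) := by
      intro X Y
      rw [two_mul X, two_mul Y]
      simp only [Real.exp_add]
      ring
    have hpt : ∀ θ : ℝ, (EE (-P+p/2) (-Q+q/2) θ - c * EE (-p/2) (-q/2) θ)^2
        = EE (-2*P+p) (-2*Q+q) θ - 2*c* EE (-P) (-Q) θ + c^2 * EE (-p) (-q) θ := by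
      intro θ
      simp only [EE]
      rw [show θ*(-2*P+p)+(1-θ)*(-2*Q+q) = 2*(θ*(-P+p/2)+(1-θ)*(-Q+q/2)) by ring,
          show θ*(-P)+(1-θ)*(-Q) = (θ*(-P+p/2)+(1-θ)*(-Q+q/2)) + (θ*(-p/2)+(1-θ)*(-q/2)) by ring,
          show θ*(-p)+(1-θ)*(-q) = 2*(θ*(-p/2)+(1-θ)*(-q/2)) by ring]
      exact hexp _ _
    have h0 : 0 ≤ ∫ θ in (0:ℝ)..1,
        (EE (-P+p/2) (-Q+q/2) θ - c * EE (-p/2) (-q/2) θ)^2 :=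
      intervalIntegral.integral_nonneg zero_le_one (fun θ _ => sq_nonneg _)
    have hint : (∫ θ in (0:ℝ)..1, (EE (-P+p/2) (-Q+q/2) θ - c * EE (-p/2) (-q/2) θ)^2)
        = A - 2*c*D + c^2*C := by
      simp only [hpt]
      rw [intervalIntegral.integral_add ((EE_intble _ _).sub ((EE_intble _ _).const_mul (2*c)))
            ((EE_intble _ _).const_mul (c^2)),
          intervalIntegral.integral_sub (EE_intble _ _) ((EE_intble _ _).const_mul (2*c)),
          intervalIntegral.integral_const_mul, intervalIntegral.integral_const_mul]
    rw [hint] at h0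
    exact h0
  have h := key (D/C)
  have h2 : 0 ≤ A - D^2/C := by
    have e : A - 2*(D/C)*D + (D/C)^2*C = A - D^2/C := by field_simp; ring
    linarith [e ▸ h]
  rw [sub_nonneg, div_le_iff₀ hCpos] at h2
  linarith

lemma mix_pos {x₁ x₂ a b : ℝ} (h1 : 0 < x₁) (h2 : 0 < x₂) (ha : 0 ≤ a) (hb : 0 ≤ b)
    (hab : a + b = 1) : 0 < a*x₁+b*x₂ := by
  rcases ha.lt_or_eq with h | h
  · nlinarith [mul_nonneg hb h2.le]
  · have hb1 : b = 1 := by linarith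
    simp [← h, hb1, h2]

lemma geo_mix {x₁ y₁ x₂ y₂ a b θ : ℝ} (hx₁ : 0 < x₁) (hy₁ : 0 < y₁) (hx₂ : 0 < x₂)
    (hy₂ : 0 < y₂) (ha : 0 ≤ a) (hb : 0 ≤ b) (hab : a + b = 1)
    (hθ0 : 0 ≤ θ) (hθ1 : θ ≤ 1) :
    a * (x₁ ^ θ * y₁ ^ (1-θ)) + b * (x₂ ^ θ * y₂ ^ (1-θ))
      ≤ (a*x₁+b*x₂) ^ θ * (a*y₁+b*y₂) ^ (1-θ) := by
  have hX : 0 < a*x₁+b*x₂ := mix_pos hx₁ hx₂ ha hb hab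
  have hY : 0 < a*y₁+b*y₂ := mix_pos hy₁ hy₂ ha hb hab
  have key : ∀ x y : ℝ, 0 < x → 0 < y → x ^ θ * y ^ (1-θ)
      ≤ (a*x₁+b*x₂) ^ θ * (a*y₁+b*y₂) ^ (1-θ) * (θ * (x/(a*x₁+b*x₂)) + (1-θ) * (y/(a*y₁+b*y₂))) := by
    intro x y hx hy
    have hgm := Real.geom_mean_le_arith_mean2_weighted hθ0
      (by linarith : (0:ℝ) ≤ 1 - θ) (div_pos hx hX).le (div_pos hy hY).le (by ring)
    have heq : (x/(a*x₁+b*x₂)) ^ θ * (y/(a*y₁+b*y₂)) ^ (1-θ)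
        = (x ^ θ * y ^ (1-θ)) / ((a*x₁+b*x₂) ^ θ * (a*y₁+b*y₂) ^ (1-θ)) := by
      rw [Real.div_rpow hx.le hX.le, Real.div_rpow hy.le hY.le]
      ring
    rw [heq, div_le_iff₀ (by positivity)] at hgm
    calc x ^ θ * y ^ (1-θ) ≤ (θ * (x/(a*x₁+b*x₂)) + (1-θ) * (y/(a*y₁+b*y₂)))
          * ((a*x₁+b*x₂) ^ θ * (a*y₁+b*y₂) ^ (1-θ)) := hgm
      _ = _ := by ring
  have h1 := key x₁ y₁ hx₁ hy₁
  have h2 := key x₂ y₂ hx₂ hy₂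
  have hsum : a * (θ * (x₁/(a*x₁+b*x₂)) + (1-θ) * (y₁/(a*y₁+b*y₂)))
      + b * (θ * (x₂/(a*x₁+b*x₂)) + (1-θ) * (y₂/(a*y₁+b*y₂))) = 1 := by
    field_simp
    ring
  have hpos : (0:ℝ) < (a*x₁+b*x₂) ^ θ * (a*y₁+b*y₂) ^ (1-θ) := by positivity
  nlinarith [mul_le_mul_of_nonneg_left h1 ha, mul_le_mul_of_nonneg_left h2 hb]

lemma harm_concave {s₁ t₁ s₂ t₂ a b : ℝ} (hs₁ : 0 < s₁) (ht₁ : 0 < t₁) (hs₂ : 0 < s₂)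
    (ht₂ : 0 < t₂) (ha : 0 ≤ a) (hb : 0 ≤ b) (hab : a + b = 1) :
    a * harmLogMean s₁ t₁ + b * harmLogMean s₂ t₂
      ≤ harmLogMean (a*s₁+b*s₂) (a*t₁+b*t₂) := by
  have hS : 0 < a*s₁+b*s₂ := mix_pos hs₁ hs₂ ha hb hab
  have hT : 0 < a*t₁+b*t₂ := mix_pos ht₁ ht₂ ha hb hab
  set P := Real.log (a*s₁+b*s₂) with hP
  set Q := Real.log (a*t₁+b*t₂) with hQ
  set D := ∫ θ in (0:ℝ)..1, EE (-P) (-Q) θ with hD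
  have hDval : D = 1 / harmLogMean (a*s₁+b*s₂) (a*t₁+b*t₂) := integral_EE_inv_harm hS hT
  have hDpos : 0 < D := integral_EE_pos _ _
  have hbig : ∀ s t : ℝ, 0 < s → 0 < t →
      D^2 * harmLogMean s t ≤ ∫ θ in (0:ℝ)..1, EE (-2*P+Real.log s) (-2*Q+Real.log t) θ := by
    intro s t hs ht
    have hcs := CS P Q (Real.log s) (Real.log t)
    rw [integral_EE_inv_harm hs ht, mul_one_div, le_div_iff₀ (harm_pos hs ht)] at hcs
    linarith [hcs]
  have hA₁ := hbig s₁ t₁ hs₁ ht₁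
  have hA₂ := hbig s₂ t₂ hs₂ ht₂
  -- pointwise bound
  have hpt : ∀ θ ∈ Set.Icc (0:ℝ) 1,
      a * EE (-2*P+Real.log s₁) (-2*Q+Real.log t₁) θ
        + b * EE (-2*P+Real.log s₂) (-2*Q+Real.log t₂) θ ≤ EE (-P) (-Q) θ := by
    intro θ hθ
    have e1 : ∀ s t : ℝ, 0 < s → 0 < t → EE (-2*P+Real.log s) (-2*Q+Real.log t) θ
        = EE (-2*P) (-2*Q) θ * (s ^ θ * t ^ (1-θ)) := by
      intro s t hs ht
      rw [← EE_log hs ht θ, EE_mul]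
    rw [e1 _ _ hs₁ ht₁, e1 _ _ hs₂ ht₂]
    have hgeo := geo_mix hs₁ ht₁ hs₂ ht₂ ha hb hab hθ.1 hθ.2
    have hw : (0:ℝ) < EE (-2*P) (-2*Q) θ := Real.exp_pos _
    have hend : EE (-2*P) (-2*Q) θ * ((a*s₁+b*s₂) ^ θ * (a*t₁+b*t₂) ^ (1-θ))
        = EE (-P) (-Q) θ := by
      rw [← EE_log hS hT θ, EE_mul]
      congr 1 <;> ring
    calc a * (EE (-2*P) (-2*Q) θ * (s₁ ^ θ * t₁ ^ (1-θ)))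
          + b * (EE (-2*P) (-2*Q) θ * (s₂ ^ θ * t₂ ^ (1-θ)))
        = EE (-2*P) (-2*Q) θ * (a * (s₁ ^ θ * t₁ ^ (1-θ)) + b * (s₂ ^ θ * t₂ ^ (1-θ))) := by ring
      _ ≤ EE (-2*P) (-2*Q) θ * ((a*s₁+b*s₂) ^ θ * (a*t₁+b*t₂) ^ (1-θ)) :=
          mul_le_mul_of_nonneg_left hgeo hw.le
      _ = EE (-P) (-Q) θ := hend
  have hmono := intervalIntegral.integral_mono_on zero_le_one
    (((EE_intble _ _).const_mul a).add ((EE_intble _ _).const_mul b)) (EE_intble (-P) (-Q)) hpt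
  rw [intervalIntegral.integral_add ((EE_intble _ _).const_mul a) ((EE_intble _ _).const_mul b),
      intervalIntegral.integral_const_mul, intervalIntegral.integral_const_mul] at hmono
  -- combine: D^2*(a h1 + b h2) ≤ a A1 + b A2 ≤ D, harm mix = 1/D
  have hharm : harmLogMean (a*s₁+b*s₂) (a*t₁+b*t₂) = 1 / D := by
    rw [hDval, one_div_one_div]
  rw [hharm, le_div_iff₀ hDpos]
  nlinarith [mul_le_mul_of_nonneg_left hA₁ ha, mul_le_mul_of_nonneg_left hA₂ hb, hDpos,
    harm_pos hs₁ ht₁, harm_pos hs₂ ht₂]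

lemma harm_scale {c s t : ℝ} (hc : 0 < c) (hs : 0 < s) (ht : 0 < t) :
    harmLogMean (c * s) (c * t) = c * harmLogMean s t := by
  rw [harm_eq (by positivity) (by positivity), harm_eq hs ht,
    Real.log_mul hc.ne' hs.ne', Real.log_mul hc.ne' ht.ne']
  rw [show Real.log c + Real.log s - (Real.log c + Real.log t) = Real.log s - Real.log t by ring]
  ring

lemma integrand_eq {a b : ℝ} (ha : 0 < a) (hb : 0 < b) (x : ℝ) :
    harmLogMean (a * Real.exp (-x)) (b * Real.exp x)
      = (a * Real.exp (-x)) / myPsi (Real.log a - Real.log b - 2*x) := by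
  rw [harm_eq (by positivity) (by positivity)]
  congr 2
  rw [Real.log_mul ha.ne' (Real.exp_ne_zero _), Real.log_mul hb.ne' (Real.exp_ne_zero _),
    Real.log_exp, Real.log_exp]
  ring

lemma integrand_cont {a b : ℝ} (ha : 0 < a) (hb : 0 < b) :
    Continuous fun x => Real.sinh x * harmLogMean (a * Real.exp (-x)) (b * Real.exp x) := by
  have he : (fun x => Real.sinh x * harmLogMean (a * Real.exp (-x)) (b * Real.exp x))
      = fun x => Real.sinh x * ((a * Real.exp (-x)) / myPsi (Real.log a - Real.log b - 2*x)) :=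
    funext fun x => by rw [integrand_eq ha hb]
  rw [he]
  exact Real.continuous_sinh.mul <| Continuous.div (by fun_prop)
    (myPsi_cont.comp (by fun_prop)) (fun x => (myPsi_pos _).ne')

lemma integrand_intble {a b : ℝ} (ha : 0 < a) (hb : 0 < b) (u v : ℝ) :
    IntervalIntegrable (fun x => Real.sinh x * harmLogMean (a * Real.exp (-x)) (b * Real.exp x))
      MeasureTheory.volume u v :=
  (integrand_cont ha hb).intervalIntegrable u v

/-- For fixed `ξ`, `(a,b) ↦ α*₁(a,b,ξ)` is positively one-homogeneous and jointly
concave on `(0,∞)²`. -/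
theorem alphaOne_homogeneous_concave (ξ : ℝ) :
    (∀ a b lam : ℝ, 0 < a → 0 < b → 0 < lam →
      alphaOne (lam * a) (lam * b) ξ = lam * alphaOne a b ξ) ∧
    ConcaveOn ℝ (Set.Ioi (0:ℝ) ×ˢ Set.Ioi (0:ℝ))
      (fun p : ℝ × ℝ => alphaOne p.1 p.2 ξ) := by
  constructor
  · intro a b lam ha hb hlam
    unfold alphaOne
    rw [← intervalIntegral.integral_const_mul]
    apply intervalIntegral.integral_congr
    intro x _
    simp only
    rw [mul_assoc lam a, mul_assoc lam b,
      harm_scale hlam (by positivity) (by positivity)]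
    ring
  · refine ⟨(convex_Ioi (0:ℝ)).prod (convex_Ioi 0), ?_⟩
    rintro ⟨p₁, p₂⟩ hp ⟨q₁, q₂⟩ hq a b ha hb hab
    simp only [Set.mem_prod, Set.mem_Ioi] at hp hq
    obtain ⟨hp₁, hp₂⟩ := hp
    obtain ⟨hq₁, hq₂⟩ := hq
    simp only [Prod.smul_mk, Prod.mk_add_mk, smul_eq_mul]
    have core : ∀ x : ℝ,
        a * harmLogMean (p₁ * Real.exp (-x)) (p₂ * Real.exp x)
          + b * harmLogMean (q₁ * Real.exp (-x)) (q₂ * Real.exp x)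
        ≤ harmLogMean ((a*p₁+b*q₁) * Real.exp (-x)) ((a*p₂+b*q₂) * Real.exp x) := by
      intro x
      rw [show (a*p₁+b*q₁) * Real.exp (-x) = a*(p₁*Real.exp (-x)) + b*(q₁*Real.exp (-x)) by ring,
          show (a*p₂+b*q₂) * Real.exp x = a*(p₂*Real.exp x) + b*(q₂*Real.exp x) by ring]
      exact harm_concave (by positivity) (by positivity) (by positivity) (by positivity) ha hb hab
    have hmixp₁ : 0 < a*p₁+b*q₁ := by
      rcases ha.lt_or_eq with h | h
      · nlinarith [mul_nonneg hb hq₁.le]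
      · have hb1 : b = 1 := by linarith
        simp [← h, hb1, hq₁]
    have hmixp₂ : 0 < a*p₂+b*q₂ := by
      rcases ha.lt_or_eq with h | h
      · nlinarith [mul_nonneg hb hq₂.le]
      · have hb1 : b = 1 := by linarith
        simp [← h, hb1, hq₂]
    rcases le_or_gt 0 ξ with hξ | hξ
    · have hm := intervalIntegral.integral_mono_on hξ
        (((integrand_intble hp₁ hp₂ 0 ξ).const_mul a).add
          ((integrand_intble hq₁ hq₂ 0 ξ).const_mul b))
        (integrand_intble hmixp₁ hmixp₂ 0 ξ) (fun x hx => by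
          have hs : 0 ≤ Real.sinh x := Real.sinh_nonneg_iff.mpr hx.1
          have := mul_le_mul_of_nonneg_left (core x) hs
          nlinarith [this])
      rw [intervalIntegral.integral_add ((integrand_intble hp₁ hp₂ 0 ξ).const_mul a)
            ((integrand_intble hq₁ hq₂ 0 ξ).const_mul b),
          intervalIntegral.integral_const_mul, intervalIntegral.integral_const_mul] at hm
      exact hm
    · have hm := intervalIntegral.integral_mono_on hξ.le
        (integrand_intble hmixp₁ hmixp₂ ξ 0)
        (((integrand_intble hp₁ hp₂ ξ 0).const_mul a).add
          ((integrand_intble hq₁ hq₂ ξ 0).const_mul b))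
        (fun x hx => by
          have hs : Real.sinh x ≤ 0 := Real.sinh_nonpos_iff.mpr hx.2
          have := mul_le_mul_of_nonpos_left (core x) hs
          nlinarith [this])
      rw [intervalIntegral.integral_add ((integrand_intble hp₁ hp₂ ξ 0).const_mul a)
            ((integrand_intble hq₁ hq₂ ξ 0).const_mul b),
          intervalIntegral.integral_const_mul, intervalIntegral.integral_const_mul] at hm
      show a * alphaOne p₁ p₂ ξ + b * alphaOne q₁ q₂ ξ ≤ alphaOne (a*p₁+b*q₁) (a*p₂+b*q₂) ξ
      unfold alphaOne
      rw [intervalIntegral.integral_symm, intervalIntegral.integral_symm ξ 0,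
        intervalIntegral.integral_symm ξ 0]
      linarith [hm]
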